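/- arXiv:1906.07341 — 2 statements merged into one kernel-verified Lean document; each statement's English description precedes it below -/
import Mathlib

section
/- Let n ≥ 2 and let S₊, S₋ partition {1,…,n} with |S₊| = n₊ ≥ 1 and |S₋| = n₋ ≥ 1, let W_{km} = 1/(n₊ n₋) if exactly one of k, m lies in S₊ and 0 otherwise, and L = diag(W·1) − W. Then for any A ∈ ℝ^{n×a} and B ∈ ℝ^{n×b}, writing A₊ ∈ ℝ^{n₊×a} and A₋ ∈ ℝ^{n₋×a} for the submatrices of rows of A indexed by S₊ and S₋ respectively (similarly B₊, B₋), one has Aᵀ L B = (1/n₊)·A₊ᵀ B₊ + (1/n₋)·A₋ᵀ B₋ − (1/(n₊ n₋))·( (A₊ᵀ 1)(1ᵀ B₋) + (A₋ᵀ 1)(1ᵀ B₊) ), where 1 denotes the all-ones vector of appropriate dimension. -/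
open Matrix

/-- closed-form identity behind the efficient AUC evaluation:
for the Laplacian `L = diag(W·1) − W` of the AUC graph,
`AᵀLB = (1/n₊)A₊ᵀB₊ + (1/n₋)A₋ᵀB₋
      − (1/(n₊n₋))((A₊ᵀ1)(1ᵀB₋) + (A₋ᵀ1)(1ᵀB₊))`,
stated entrywise: row restrictions to `S₊`/`S₋` become sums over `S₊`/`S₋`. -/
theorem stmt5 {n a b : ℕ} (hn : 2 ≤ n) (Sp Sm : Finset (Fin n))
    (hdisj : Disjoint Sp Sm) (hunion : Sp ∪ Sm = Finset.univ)
    (hp : 1 ≤ Sp.card) (hm : 1 ≤ Sm.card)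
    (W L : Matrix (Fin n) (Fin n) ℝ)
    (hW : ∀ k m : Fin n, W k m =
      if (k ∈ Sp ∧ m ∈ Sm) ∨ (k ∈ Sm ∧ m ∈ Sp) then
        1 / ((Sp.card : ℝ) * (Sm.card : ℝ)) else 0)
    (hL : L = Matrix.diagonal (fun k => ∑ m, W k m) - W)
    (A : Matrix (Fin n) (Fin a) ℝ) (B : Matrix (Fin n) (Fin b) ℝ) :
    ∀ (s : Fin a) (t : Fin b),
      (Aᵀ * L * B) s t =
        (1 / (Sp.card : ℝ)) * ∑ p ∈ Sp, A p s * B p t +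
        (1 / (Sm.card : ℝ)) * ∑ q ∈ Sm, A q s * B q t -
        (1 / ((Sp.card : ℝ) * (Sm.card : ℝ))) *
          ((∑ p ∈ Sp, A p s) * (∑ q ∈ Sm, B q t) +
           (∑ q ∈ Sm, A q s) * (∑ p ∈ Sp, B p t)) := by
  intro s t
  have npne : (Sp.card : ℝ) ≠ 0 := by positivity
  have nmne : (Sm.card : ℝ) ≠ 0 := by positivity
  have hdl := Finset.disjoint_left.mp hdisj
  have hdr := Finset.disjoint_right.mp hdisj
  have split : ∀ f : Fin n → ℝ, ∑ k, f k = ∑ k ∈ Sp, f k + ∑ k ∈ Sm, f k := fun f => by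
    rw [← hunion, Finset.sum_union hdisj]
  set c : ℝ := 1 / ((Sp.card : ℝ) * (Sm.card : ℝ)) with hc
  have hrow : ∀ k, (∑ m, W k m) = if k ∈ Sp then 1 / (Sp.card : ℝ) else 1 / (Sm.card : ℝ) := by
    intro k
    rw [split]
    by_cases hk : k ∈ Sp
    · have e1 : ∑ m ∈ Sp, W k m = 0 := Finset.sum_eq_zero fun m hm' => by
        rw [hW, if_neg]
        push_neg
        exact ⟨fun _ => hdl hm', fun h => absurd h (hdl hk)⟩
      have e2 : ∑ m ∈ Sm, W k m = (Sm.card : ℝ) * c := by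
        rw [Finset.sum_congr rfl (fun m hm' => by rw [hW, if_pos (Or.inl ⟨hk, hm'⟩)]),
          Finset.sum_const, nsmul_eq_mul]
      rw [e1, e2, if_pos hk, hc]
      field_simp
      ring
    · have hk' : k ∈ Sm := by
        have := Finset.mem_univ k
        rw [← hunion, Finset.mem_union] at this
        tauto
      have e1 : ∑ m ∈ Sp, W k m = (Sp.card : ℝ) * c := by
        rw [Finset.sum_congr rfl (fun m hm' => by rw [hW, if_pos (Or.inr ⟨hk', hm'⟩)]),
          Finset.sum_const, nsmul_eq_mul]
      have e2 : ∑ m ∈ Sm, W k m = 0 := Finset.sum_eq_zero fun m hm' => by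
        rw [hW, if_neg]
        push_neg
        exact ⟨fun h => absurd h hk, fun _ => hdr hm'⟩
      rw [e1, e2, if_neg hk, hc]
      field_simp
      ring
  have entry : (Aᵀ * L * B) s t = ∑ k, ∑ m, A k s * L k m * B m t := by
    rw [Matrix.mul_apply]
    simp_rw [Matrix.mul_apply, Matrix.transpose_apply, Finset.sum_mul]
    rw [Finset.sum_comm]
  rw [entry]
  have hLe : ∀ k m, L k m = (if k = m then (∑ j, W k j) else 0) - W k m := by
    intro k m
    rw [hL, Matrix.sub_apply, Matrix.diagonal_apply]
  simp_rw [hLe, mul_sub, sub_mul, Finset.sum_sub_distrib]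
  have hdiag : ∑ k, ∑ m, A k s * (if k = m then (∑ j, W k j) else 0) * B m t
      = (1 / (Sp.card : ℝ)) * ∑ p ∈ Sp, A p s * B p t +
        (1 / (Sm.card : ℝ)) * ∑ q ∈ Sm, A q s * B q t := by
    have h1 : ∀ k : Fin n, ∑ m, A k s * (if k = m then (∑ j, W k j) else 0) * B m t
        = (if k ∈ Sp then 1 / (Sp.card : ℝ) else 1 / (Sm.card : ℝ)) * (A k s * B k t) := by
      intro k
      rw [Finset.sum_eq_single k (fun m _ hmk => by simp [Ne.symm hmk])
        (fun h => absurd (Finset.mem_univ k) h)]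
      rw [if_pos (rfl : k = k), hrow]
      ring
    simp_rw [h1]
    rw [split]
    have e1 : ∑ k ∈ Sp, (if k ∈ Sp then 1 / (Sp.card : ℝ) else 1 / (Sm.card : ℝ)) * (A k s * B k t)
        = (1 / (Sp.card : ℝ)) * ∑ p ∈ Sp, A p s * B p t := by
      rw [Finset.mul_sum]
      exact Finset.sum_congr rfl fun k hk => by rw [if_pos hk]
    have e2 : ∑ k ∈ Sm, (if k ∈ Sp then 1 / (Sp.card : ℝ) else 1 / (Sm.card : ℝ)) * (A k s * B k t)
        = (1 / (Sm.card : ℝ)) * ∑ q ∈ Sm, A q s * B q t := by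
      rw [Finset.mul_sum]
      exact Finset.sum_congr rfl fun k hk => by rw [if_neg (hdr hk)]
    rw [e1, e2]
  have hW2 : ∑ k, ∑ m, A k s * W k m * B m t
      = c * ((∑ p ∈ Sp, A p s) * (∑ q ∈ Sm, B q t) +
             (∑ q ∈ Sm, A q s) * (∑ p ∈ Sp, B p t)) := by
    rw [split]
    have inner : ∀ k : Fin n, ∑ m, A k s * W k m * B m t
        = ∑ m ∈ Sp, A k s * W k m * B m t + ∑ m ∈ Sm, A k s * W k m * B m t :=
      fun k => split _
    simp_rw [inner]
    have h1 : ∀ k ∈ Sp, ∑ m ∈ Sp, A k s * W k m * B m t = 0 :=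
      fun k hk => Finset.sum_eq_zero fun m hm' => by
        rw [hW, if_neg]
        · ring
        push_neg
        exact ⟨fun _ => hdl hm', fun h => absurd h (hdl hk)⟩
    have h2 : ∀ k ∈ Sp, ∑ m ∈ Sm, A k s * W k m * B m t
        = c * (A k s * ∑ m ∈ Sm, B m t) := by
      intro k hk
      rw [Finset.mul_sum, Finset.mul_sum]
      refine Finset.sum_congr rfl fun m hm' => ?_
      rw [hW, if_pos (Or.inl ⟨hk, hm'⟩)]; ring
    have h3 : ∀ k ∈ Sm, ∑ m ∈ Sp, A k s * W k m * B m t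
        = c * (A k s * ∑ m ∈ Sp, B m t) := by
      intro k hk
      rw [Finset.mul_sum, Finset.mul_sum]
      refine Finset.sum_congr rfl fun m hm' => ?_
      rw [hW, if_pos (Or.inr ⟨hk, hm'⟩)]; ring
    have h4 : ∀ k ∈ Sm, ∑ m ∈ Sm, A k s * W k m * B m t = 0 :=
      fun k hk => Finset.sum_eq_zero fun m hm' => by
        rw [hW, if_neg]
        · ring
        push_neg
        exact ⟨fun h => absurd h (hdr hk), fun _ => hdr hm'⟩
    have E1 : ∑ k ∈ Sp, (∑ m ∈ Sp, A k s * W k m * B m t + ∑ m ∈ Sm, A k s * W k m * B m t)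
        = ∑ k ∈ Sp, c * (A k s * ∑ m ∈ Sm, B m t) :=
      Finset.sum_congr rfl fun k hk => by rw [h1 k hk, h2 k hk, zero_add]
    have E2 : ∑ k ∈ Sm, (∑ m ∈ Sp, A k s * W k m * B m t + ∑ m ∈ Sm, A k s * W k m * B m t)
        = ∑ k ∈ Sm, c * (A k s * ∑ m ∈ Sp, B m t) :=
      Finset.sum_congr rfl fun k hk => by rw [h3 k hk, h4 k hk, add_zero]
    rw [E1, E2, ← Finset.mul_sum, ← Finset.mul_sum, ← Finset.sum_mul, ← Finset.sum_mul]
    ring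
  rw [hdiag, hW2]
end

section
/- Let n ≥ 2 and let S₊, S₋ partition {1,…,n} with |S₊| = n₊ ≥ 1 and |S₋| = n₋ ≥ 1, let W_{km} = 1/(n₊ n₋) if exactly one of k, m lies in S₊ and 0 otherwise, and L = diag(W·1) − W. Then L is symmetric positive semidefinite and its spectral norm satisfies ‖L‖₂ = (n₊ + n₋)/(n₊ n₋); in particular every eigenvalue of L lies in [0, n/(n₊ n₋)] where n = n₊ + n₋. -/
open Matrix

/-- The spectral norm (largest singular value) of a real matrix. -/
noncomputable def matSpectralNorm {m n : ℕ} (A : Matrix (Fin m) (Fin n) ℝ) : ℝ :=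
  Real.sqrt (⨆ i, (Matrix.isHermitian_conjTranspose_mul_self A).eigenvalues i)

lemma aux_spec_to_eig {n : ℕ} {A : Matrix (Fin n) (Fin n) ℝ} {μ : ℝ}
    (h : μ ∈ spectrum ℝ A) : ∃ v : Fin n → ℝ, v ≠ 0 ∧ A *ᵥ v = μ • v := by
  rw [← AlgEquiv.spectrum_eq (Matrix.toLinAlgEquiv' (R := ℝ) (n := Fin n))] at h
  obtain ⟨v, hv⟩ := (Module.End.hasEigenvalue_iff_mem_spectrum.mpr h).exists_hasEigenvector
  refine ⟨v, hv.2, ?_⟩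
  have := hv.apply_eq_smul
  rwa [Matrix.toLinAlgEquiv'_apply] at this

lemma aux_eig_to_spec {n : ℕ} {A : Matrix (Fin n) (Fin n) ℝ} {μ : ℝ} {v : Fin n → ℝ}
    (hv : v ≠ 0) (h : A *ᵥ v = μ • v) : μ ∈ spectrum ℝ A := by
  rw [← AlgEquiv.spectrum_eq (Matrix.toLinAlgEquiv' (R := ℝ) (n := Fin n))]
  refine (Module.End.hasEigenvalue_of_hasEigenvector
    ⟨Module.End.mem_eigenspace_iff.mpr ?_, hv⟩).mem_spectrum (μ := μ)
  rw [Matrix.toLinAlgEquiv'_apply]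
  exact h

set_option maxHeartbeats 1000000 in
/-- the Laplacian `L = diag(W·1) − W` of the AUC graph is
symmetric positive semidefinite, its spectral norm equals
`(n₊ + n₋)/(n₊ n₋)`, and every (real) eigenvalue of `L` lies in
`[0, n/(n₊ n₋)]` with `n = n₊ + n₋`. -/
theorem stmt6 {n : ℕ} (hn : 2 ≤ n) (Sp Sm : Finset (Fin n))
    (hdisj : Disjoint Sp Sm) (hunion : Sp ∪ Sm = Finset.univ)
    (hp : 1 ≤ Sp.card) (hm : 1 ≤ Sm.card)
    (W L : Matrix (Fin n) (Fin n) ℝ)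
    (hW : ∀ k m : Fin n, W k m =
      if (k ∈ Sp ∧ m ∈ Sm) ∨ (k ∈ Sm ∧ m ∈ Sp) then
        1 / ((Sp.card : ℝ) * (Sm.card : ℝ)) else 0)
    (hL : L = Matrix.diagonal (fun k => ∑ m, W k m) - W) :
    L.IsSymm ∧ L.PosSemidef ∧
    matSpectralNorm L = ((Sp.card : ℝ) + (Sm.card : ℝ)) / ((Sp.card : ℝ) * (Sm.card : ℝ)) ∧
    ∀ μ ∈ spectrum ℝ L,
      μ ∈ Set.Icc (0 : ℝ) ((n : ℝ) / ((Sp.card : ℝ) * (Sm.card : ℝ))) := by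
  set p : ℝ := (Sp.card : ℝ) with hpdef
  set q : ℝ := (Sm.card : ℝ) with hqdef
  have hp0 : (0 : ℝ) < p := by
    rw [hpdef]
    exact_mod_cast Nat.lt_of_lt_of_le Nat.zero_lt_one hp
  have hq0 : (0 : ℝ) < q := by
    rw [hqdef]
    exact_mod_cast Nat.lt_of_lt_of_le Nat.zero_lt_one hm
  set c : ℝ := 1 / (p * q) with hcdef
  have hc0 : (0 : ℝ) < c := by positivity
  set lam : ℝ := (p + q) / (p * q) with hlamdef
  have hlam0 : (0 : ℝ) < lam := by positivity
  have hlamc : lam = c * (p + q) := by rw [hlamdef, hcdef]; ring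
  -- membership facts
  have hmem : ∀ k : Fin n, k ∈ Sp ∨ k ∈ Sm := by
    intro k
    have := Finset.mem_univ k
    rw [← hunion] at this
    exact Finset.mem_union.mp this
  have hnotm : ∀ k : Fin n, k ∈ Sp → k ∉ Sm := fun k hk => Finset.disjoint_left.mp hdisj hk
  have hnotp : ∀ k : Fin n, k ∈ Sm → k ∉ Sp := fun k hk => Finset.disjoint_right.mp hdisj hk
  -- entries of W
  have hWp : ∀ k, k ∈ Sp → ∀ m, W k m = if m ∈ Sm then c else 0 := by
    intro k hk m
    rw [hW]
    by_cases hms : m ∈ Sm <;> simp [hms, hk, hnotm k hk, hcdef]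
  have hWm : ∀ k, k ∈ Sm → ∀ m, W k m = if m ∈ Sp then c else 0 := by
    intro k hk m
    rw [hW]
    by_cases hms : m ∈ Sp <;> simp [hms, hk, hnotp k hk, hcdef]
  -- symmetry of W and L
  have hWsymm : Wᵀ = W := by
    ext k m
    rw [Matrix.transpose_apply, hW, hW]
    refine if_congr ?_ rfl rfl
    tauto
  have hLT : Lᵀ = L := by
    rw [hL, Matrix.transpose_sub, Matrix.diagonal_transpose, hWsymm]
  -- row formula for L *ᵥ v
  have hrowP : ∀ (v : Fin n → ℝ) (k : Fin n), k ∈ Sp →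
      (L *ᵥ v) k = c * (q * v k - ∑ m ∈ Sm, v m) := by
    intro v k hk
    have h1 : (L *ᵥ v) k = (∑ m, W k m) * v k - ∑ m, W k m * v m := by
      rw [hL, Matrix.sub_mulVec]
      rw [show ((Matrix.diagonal (fun k => ∑ m, W k m) *ᵥ v - W *ᵥ v) k
        = (Matrix.diagonal (fun k => ∑ m, W k m) *ᵥ v) k - (W *ᵥ v) k) from rfl]
      rw [Matrix.mulVec_diagonal]
      rfl
    have h2 : ∑ m, W k m = q * c := by
      simp only [hWp k hk]
      rw [Finset.sum_ite_mem, Finset.univ_inter, Finset.sum_const, nsmul_eq_mul, hqdef]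
    have h3 : ∑ m, W k m * v m = c * ∑ m ∈ Sm, v m := by
      simp only [hWp k hk, ite_mul, zero_mul]
      rw [Finset.sum_ite_mem, Finset.univ_inter, Finset.mul_sum]
    rw [h1, h2, h3]; ring
  have hrowM : ∀ (v : Fin n → ℝ) (k : Fin n), k ∈ Sm →
      (L *ᵥ v) k = c * (p * v k - ∑ m ∈ Sp, v m) := by
    intro v k hk
    have h1 : (L *ᵥ v) k = (∑ m, W k m) * v k - ∑ m, W k m * v m := by
      rw [hL, Matrix.sub_mulVec]
      rw [show ((Matrix.diagonal (fun k => ∑ m, W k m) *ᵥ v - W *ᵥ v) k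
        = (Matrix.diagonal (fun k => ∑ m, W k m) *ᵥ v) k - (W *ᵥ v) k) from rfl]
      rw [Matrix.mulVec_diagonal]
      rfl
    have h2 : ∑ m, W k m = p * c := by
      simp only [hWm k hk]
      rw [Finset.sum_ite_mem, Finset.univ_inter, Finset.sum_const, nsmul_eq_mul, hpdef]
    have h3 : ∑ m, W k m * v m = c * ∑ m ∈ Sp, v m := by
      simp only [hWm k hk, ite_mul, zero_mul]
      rw [Finset.sum_ite_mem, Finset.univ_inter, Finset.mul_sum]
    rw [h1, h2, h3]; ring
  -- splitting sums over the partition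
  have hsplit : ∀ f : Fin n → ℝ, ∑ k, f k = ∑ k ∈ Sp, f k + ∑ k ∈ Sm, f k := by
    intro f
    rw [← Finset.sum_union hdisj, hunion]
  -- quadratic form
  have hquad : ∀ v : Fin n → ℝ, v ⬝ᵥ (L *ᵥ v) =
      c * (q * (∑ k ∈ Sp, v k ^ 2) + p * (∑ k ∈ Sm, v k ^ 2)
        - 2 * (∑ k ∈ Sp, v k) * (∑ k ∈ Sm, v k)) := by
    intro v
    have h0 : v ⬝ᵥ (L *ᵥ v) = ∑ k, v k * (L *ᵥ v) k := rfl
    rw [h0, hsplit (fun k => v k * (L *ᵥ v) k)]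
    have e1 : ∑ k ∈ Sp, v k * (L *ᵥ v) k
        = c * q * (∑ k ∈ Sp, v k ^ 2) - c * (∑ m ∈ Sm, v m) * (∑ k ∈ Sp, v k) := by
      rw [Finset.sum_congr rfl (fun k hk => by rw [hrowP v k hk])]
      rw [Finset.sum_congr rfl
        (fun k _ => by ring_nf :
          ∀ k ∈ Sp, v k * (c * (q * v k - ∑ m ∈ Sm, v m))
            = c * q * v k ^ 2 - c * (∑ m ∈ Sm, v m) * v k)]
      rw [Finset.sum_sub_distrib, ← Finset.mul_sum, ← Finset.mul_sum]
    have e2 : ∑ k ∈ Sm, v k * (L *ᵥ v) k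
        = c * p * (∑ k ∈ Sm, v k ^ 2) - c * (∑ m ∈ Sp, v m) * (∑ k ∈ Sm, v k) := by
      rw [Finset.sum_congr rfl (fun k hk => by rw [hrowM v k hk])]
      rw [Finset.sum_congr rfl
        (fun k _ => by ring_nf :
          ∀ k ∈ Sm, v k * (c * (p * v k - ∑ m ∈ Sp, v m))
            = c * p * v k ^ 2 - c * (∑ m ∈ Sp, v m) * v k)]
      rw [Finset.sum_sub_distrib, ← Finset.mul_sum, ← Finset.mul_sum]
    rw [e1, e2]; ring
  have hdot : ∀ v : Fin n → ℝ, v ⬝ᵥ v = ∑ k ∈ Sp, v k ^ 2 + ∑ k ∈ Sm, v k ^ 2 := by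
    intro v
    have h0 : v ⬝ᵥ v = ∑ k, v k ^ 2 := by simp [dotProduct, sq]
    rw [h0, hsplit (fun k => v k ^ 2)]
  -- Cauchy-Schwarz
  have hcs : ∀ (s : Finset (Fin n)) (v : Fin n → ℝ),
      (∑ k ∈ s, v k) ^ 2 ≤ (s.card : ℝ) * ∑ k ∈ s, v k ^ 2 := by
    intro s v
    have := Finset.sum_mul_sq_le_sq_mul_sq s (fun _ => (1 : ℝ)) v
    simpa using this
  -- positive semidefiniteness of the quadratic form
  have hnn : ∀ v : Fin n → ℝ, 0 ≤ v ⬝ᵥ (L *ᵥ v) := by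
    intro v
    rw [hquad v]
    have h1 := hcs Sp v
    have h2 := hcs Sm v
    rw [← hpdef] at h1
    rw [← hqdef] at h2
    apply mul_nonneg hc0.le
    nlinarith [sq_nonneg (q * (∑ k ∈ Sp, v k) - p * (∑ k ∈ Sm, v k)),
      mul_pos hp0 hq0, mul_le_mul_of_nonneg_left h1 hq0.le,
      mul_le_mul_of_nonneg_left h2 hp0.le]
  -- upper bound of quadratic form
  have hub : ∀ v : Fin n → ℝ, v ⬝ᵥ (L *ᵥ v) ≤ lam * (v ⬝ᵥ v) := by
    intro v
    rw [hquad v, hdot v, hlamc]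
    have h1 := hcs Sp v
    have h2 := hcs Sm v
    rw [← hpdef] at h1
    rw [← hqdef] at h2
    have key : q * (∑ k ∈ Sp, v k ^ 2) + p * (∑ k ∈ Sm, v k ^ 2)
        - 2 * (∑ k ∈ Sp, v k) * (∑ k ∈ Sm, v k)
        ≤ (p + q) * (∑ k ∈ Sp, v k ^ 2 + ∑ k ∈ Sm, v k ^ 2) := by
      nlinarith [sq_nonneg ((∑ k ∈ Sp, v k) + (∑ k ∈ Sm, v k))]
    calc c * (q * (∑ k ∈ Sp, v k ^ 2) + p * (∑ k ∈ Sm, v k ^ 2)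
            - 2 * (∑ k ∈ Sp, v k) * (∑ k ∈ Sm, v k))
        ≤ c * ((p + q) * (∑ k ∈ Sp, v k ^ 2 + ∑ k ∈ Sm, v k ^ 2)) :=
          mul_le_mul_of_nonneg_left key hc0.le
      _ = c * (p + q) * (∑ k ∈ Sp, v k ^ 2 + ∑ k ∈ Sm, v k ^ 2) := by ring
  have hdsn : ∀ v : Fin n → ℝ, 0 ≤ v ⬝ᵥ v := by
    intro v
    exact Finset.sum_nonneg fun k _ => mul_self_nonneg (v k)
  -- positivity of v ⬝ᵥ v for nonzero v
  have hvvpos : ∀ v : Fin n → ℝ, v ≠ 0 → 0 < v ⬝ᵥ v := by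
    intro v hv
    rcases lt_or_eq_of_le (hdsn v) with h | h
    · exact h
    · exact absurd (dotProduct_self_eq_zero.mp h.symm) hv
  -- eigenvalue bounds for L
  have heig : ∀ (μ : ℝ) (v : Fin n → ℝ), v ≠ 0 → L *ᵥ v = μ • v → 0 ≤ μ ∧ μ ≤ lam := by
    intro μ v hv hev
    have hvv := hvvpos v hv
    have h1 : v ⬝ᵥ (L *ᵥ v) = μ * (v ⬝ᵥ v) := by
      rw [hev]
      simp [dotProduct_smul, smul_eq_mul]
    constructor
    · have := hnn v
      rw [h1] at this
      exact (mul_nonneg_iff_of_pos_right hvv).mp this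
    · have := hub v
      rw [h1] at this
      exact le_of_mul_le_mul_right this hvv
  -- symmetric dot product identity
  have hsymmdot : ∀ v w : Fin n → ℝ, v ⬝ᵥ (L *ᵥ w) = (L *ᵥ v) ⬝ᵥ w := by
    intro v w
    rw [Matrix.dotProduct_mulVec, ← Matrix.mulVec_transpose, hLT]
  -- the Hermitian matrix Lᵀ * L
  set M : Matrix (Fin n) (Fin n) ℝ := Lᵀ * L with hMdef
  have hM := Matrix.isHermitian_conjTranspose_mul_self L
  -- claim 1: all eigenvalues of M are ≤ lam ^ 2
  have claim1 : ∀ i, hM.eigenvalues i ≤ lam ^ 2 := by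
    intro i
    have hi : hM.eigenvalues i ∈ spectrum ℝ M := hM.eigenvalues_mem_spectrum_real i
    obtain ⟨v, hv0, hv⟩ := aux_spec_to_eig hi
    set μ := hM.eigenvalues i with hμdef
    have hLLv : L *ᵥ (L *ᵥ v) = μ • v := by
      rw [Matrix.mulVec_mulVec]
      rw [hMdef, hLT] at hv
      exact hv
    have hμ0 : 0 ≤ μ := by
      have h1 : μ * (v ⬝ᵥ v) = (L *ᵥ v) ⬝ᵥ (L *ᵥ v) := by
        rw [← hsymmdot v (L *ᵥ v), hLLv]
        simp [dotProduct_smul, smul_eq_mul]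
      have h2 : 0 ≤ μ * (v ⬝ᵥ v) := h1 ▸ hdsn _
      exact (mul_nonneg_iff_of_pos_right (hvvpos v hv0)).mp h2
    set r : ℝ := Real.sqrt μ with hrdef
    have hr0 : 0 ≤ r := Real.sqrt_nonneg μ
    have hrr : r * r = μ := Real.mul_self_sqrt hμ0
    set u : Fin n → ℝ := (L *ᵥ v) + r • v with hudef
    have hLu : L *ᵥ u = r • u := by
      rw [hudef, Matrix.mulVec_add, Matrix.mulVec_smul, hLLv]
      rw [smul_add, smul_smul, hrr]
      abel
    by_cases hu : u = 0
    · -- L *ᵥ v = (-r) • v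
      have hLv : L *ᵥ v = (-r) • v := by
        have : (L *ᵥ v) + r • v = 0 := hu
        have := eq_neg_of_add_eq_zero_left this
        rw [this, neg_smul]
      have := (heig (-r) v hv0 hLv).1
      have hrz : r = 0 := le_antisymm (by linarith) hr0
      have hmz : μ = 0 := by rw [← hrr, hrz, mul_zero]
      exact hmz.le.trans (by positivity)
    · have hb := heig r u hu hLu
      calc μ = r * r := hrr.symm
        _ ≤ lam * lam := mul_le_mul hb.2 hb.2 hr0 hlam0.le
        _ = lam ^ 2 := (sq lam).symm
  -- explicit top eigenvector
  set x : Fin n → ℝ := fun k => if k ∈ Sp then q else -p with hxdef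
  obtain ⟨k₀, hk₀⟩ := Finset.card_pos.mp (Nat.lt_of_lt_of_le Nat.zero_lt_one hp)
  have hx0 : x ≠ 0 := by
    intro h
    have : x k₀ = 0 := by rw [h]; rfl
    rw [hxdef] at this
    simp only [hk₀, if_true] at this
    exact hq0.ne' this
  have hsumSm : ∑ m ∈ Sm, x m = -(p * q) := by
    rw [Finset.sum_congr rfl (fun m hm' => by
      simp only [hxdef, hnotp m hm', if_false] :
      ∀ m ∈ Sm, x m = -p)]
    rw [Finset.sum_const, nsmul_eq_mul, ← hqdef]
    ring
  have hsumSp : ∑ m ∈ Sp, x m = p * q := by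
    rw [Finset.sum_congr rfl (fun m hm' => by
      simp only [hxdef, hm', if_true] :
      ∀ m ∈ Sp, x m = q)]
    rw [Finset.sum_const, nsmul_eq_mul, ← hpdef]
  have hLx : L *ᵥ x = lam • x := by
    funext k
    rcases hmem k with hk | hk
    · rw [hrowP x k hk, hsumSm]
      have hxk : x k = q := by simp only [hxdef, hk, if_true]
      rw [hxk, Pi.smul_apply, hxk, smul_eq_mul, hlamc]
      ring
    · rw [hrowM x k hk, hsumSp]
      have hxk : x k = -p := by simp only [hxdef, hnotp k hk, if_false]
      rw [hxk, Pi.smul_apply, hxk, smul_eq_mul, hlamc]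
      ring
  have hMx : M *ᵥ x = (lam ^ 2) • x := by
    rw [hMdef, hLT, ← Matrix.mulVec_mulVec, hLx, Matrix.mulVec_smul, hLx,
      smul_smul, sq]
  have hCT : Lᴴ = Lᵀ := by
    ext i j
    simp [Matrix.conjTranspose_apply, Matrix.transpose_apply]
  have claim2 : ∃ i, hM.eigenvalues i = lam ^ 2 := by
    have hMx' : (Lᴴ * L) *ᵥ x = (lam ^ 2) • x := by rw [hCT]; exact hMx
    have : lam ^ 2 ∈ spectrum ℝ (Lᴴ * L) := aux_eig_to_spec hx0 hMx'
    rw [hM.spectrum_real_eq_range_eigenvalues] at this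
    obtain ⟨i, hi⟩ := this
    exact ⟨i, hi⟩
  -- compute the supremum
  have hne : Nonempty (Fin n) := ⟨⟨0, by omega⟩⟩
  have hsup : (⨆ i, hM.eigenvalues i) = lam ^ 2 := by
    apply le_antisymm
    · exact ciSup_le claim1
    · obtain ⟨i, hi⟩ := claim2
      rw [← hi]
      exact le_ciSup (Set.Finite.bddAbove (Set.finite_range _)) i
  have hspecnorm : matSpectralNorm L = lam := by
    show Real.sqrt (⨆ i, hM.eigenvalues i) = lam
    rw [hsup, sq, Real.sqrt_mul_self hlam0.le]
  -- cardinality identity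
  have hcard : p + q = (n : ℝ) := by
    have : Sp.card + Sm.card = n := by
      rw [← Finset.card_union_of_disjoint hdisj, hunion, Finset.card_univ,
        Fintype.card_fin]
    rw [hpdef, hqdef]
    exact_mod_cast this
  -- assemble
  refine ⟨hLT, Matrix.posSemidef_iff_dotProduct_mulVec.mpr ⟨?_, ?_⟩, hspecnorm, ?_⟩
  · -- IsHermitian
    have hct : Lᴴ = Lᵀ := by
      ext i j
      simp [Matrix.conjTranspose_apply, Matrix.transpose_apply]
    rw [Matrix.IsHermitian, hct, hLT]
  · intro v
    have : star v = v := by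
      funext k
      simp
    rw [this]
    exact hnn v
  · intro μ hμ
    obtain ⟨v, hv0, hv⟩ := aux_spec_to_eig hμ
    obtain ⟨h0, h1⟩ := heig μ v hv0 hv
    refine ⟨h0, ?_⟩
    rw [← hcard]
    exact h1
end
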